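/- Let Q_1, Q_2, W_1, W_2 be real numbers with min(Q_1, Q_2, W_1, W_2) = 0 and Q_1 + Q_2 < W_1 + W_2. Set C_0 = Q_1 + Q_2, C_{−1} = Q_1 + Q_2 + W_1 + W_2, and assume C_0 > 0 and C_{−1} > 2·C_0. Define X = min(Q_2, W_1) and Y = Q_1 + W_1. Then min(2Y, C_{−1}, 2X + Y, Y + C_0) = X + Y; that is, the point (X,Y) lies on the component Γ_2 of the tropical spectral curve. -/

import Mathlib

/-- For `g = 1`, the image `(X,Y) = (min(Q_2,W_1), Q_1+W_1)` of a point of the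
isolevel set under the ultra-discrete eigenvector map lies on the component
`Γ_2` of the tropical spectral curve:
`min(2Y, C_{−1}, 2X+Y, Y+C_0) = X+Y`. -/
theorem ud_eigenvector_map_g1_on_curve (Q1 Q2 W1 W2 C0 Cm1 X Y : ℝ)
    (hmin : min (min Q1 Q2) (min W1 W2) = 0)
    (hlt : Q1 + Q2 < W1 + W2)
    (hC0 : C0 = Q1 + Q2) (hCm1 : Cm1 = Q1 + Q2 + W1 + W2)
    (hC0pos : 0 < C0) (hgen : Cm1 > 2 * C0)
    (hX : X = min Q2 W1) (hY : Y = Q1 + W1) :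
    min (min (2 * Y) Cm1) (min (2 * X + Y) (Y + C0)) = X + Y := by
  have hQ1 : 0 ≤ Q1 := by
    have := hmin ▸ min_le_of_left_le (b := min Q1 Q2) (min_le_left Q1 Q2); linarith [this]
  have hQ2 : 0 ≤ Q2 := by
    have := hmin ▸ min_le_of_left_le (b := min Q1 Q2) (min_le_right Q1 Q2); linarith [this]
  have hW1 : 0 ≤ W1 := by
    have := hmin ▸ min_le_of_right_le (c := min W1 W2) (min_le_left W1 W2); linarith [this]
  have hW2 : 0 ≤ W2 := by
    have := hmin ▸ min_le_of_right_le (c := min W1 W2) (min_le_right W1 W2); linarith [this]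
  have hzero : Q1 = 0 ∨ Q2 = 0 ∨ W1 = 0 ∨ W2 = 0 := by
    rcases min_cases (min Q1 Q2) (min W1 W2) with ⟨h, _⟩ | ⟨h, _⟩
    · rcases min_cases Q1 Q2 with ⟨h2, _⟩ | ⟨h2, _⟩
      · exact Or.inl (by linarith)
      · exact Or.inr (Or.inl (by linarith))
    · rcases min_cases W1 W2 with ⟨h2, _⟩ | ⟨h2, _⟩
      · exact Or.inr (Or.inr (Or.inl (by linarith)))
      · exact Or.inr (Or.inr (Or.inr (by linarith)))
  have hX1 : X ≤ Q2 := hX ▸ min_le_left _ _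
  have hX2 : X ≤ W1 := hX ▸ min_le_right _ _
  have hX0 : 0 ≤ X := hX ▸ le_min hQ2 hW1
  apply le_antisymm
  · -- min ≤ X + Y : find a witness term equal to X+Y in each case
    rcases hzero with h0 | h0 | h0 | h0
    · -- Q1 = 0
      rcases le_total W1 Q2 with hle | hle
      · have hXW : X = W1 := by rw [hX, min_eq_right hle]
        calc min (min (2 * Y) Cm1) (min (2 * X + Y) (Y + C0)) ≤ 2 * Y :=
              le_trans (min_le_left _ _) (min_le_left _ _)
          _ = X + Y := by rw [hXW, hY, h0]; ring
      · have hXQ : X = Q2 := by rw [hX, min_eq_left hle]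
        calc min (min (2 * Y) Cm1) (min (2 * X + Y) (Y + C0)) ≤ Y + C0 :=
              le_trans (min_le_right _ _) (min_le_right _ _)
          _ = X + Y := by rw [hXQ, hC0, h0]; ring
    · -- Q2 = 0
      have hX' : X = 0 := le_antisymm (h0 ▸ hX1) hX0
      calc min (min (2 * Y) Cm1) (min (2 * X + Y) (Y + C0)) ≤ 2 * X + Y :=
            le_trans (min_le_right _ _) (min_le_left _ _)
        _ = X + Y := by rw [hX']; ring
    · -- W1 = 0
      have hX' : X = 0 := le_antisymm (h0 ▸ hX2) hX0
      calc min (min (2 * Y) Cm1) (min (2 * X + Y) (Y + C0)) ≤ 2 * X + Y :=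
            le_trans (min_le_right _ _) (min_le_left _ _)
        _ = X + Y := by rw [hX']; ring
    · -- W2 = 0
      have hW1Q2 : Q2 ≤ W1 := by linarith
      have hXQ : X = Q2 := by rw [hX, min_eq_left hW1Q2]
      calc min (min (2 * Y) Cm1) (min (2 * X + Y) (Y + C0)) ≤ Cm1 :=
            le_trans (min_le_left _ _) (min_le_right _ _)
        _ = X + Y := by rw [hXQ, hCm1, hY, h0]; ring
  · -- X + Y ≤ min ...
    refine le_min (le_min ?_ ?_) (le_min ?_ ?_) <;> subst hY <;> subst hC0 <;>
      subst hCm1 <;> linarith
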